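/- arXiv:2107.11701 — 4 statements merged into one kernel-verified Lean document; each statement's English description precedes it below -/
import Mathlib

section
/- Let l ≥ 1 be a natural number, let g : (0,∞) → ℝ be twice continuously differentiable, and define u : ℝ² \ {0} → ℝ by u(x) = g(‖x‖)·T_l(x₁/‖x‖), so that in polar coordinates u(r cos θ, r sin θ) = g(r)·cos(l θ). Then u satisfies the modified Helmholtz equation Δu(x) = u(x) for all x ≠ 0 if and only if g satisfies the modified Bessel differential equation of order l, r²·g''(r) + r·g'(r) − (r² + l²)·g(r) = 0, for all r > 0. -/
open Real

/-- The Euclidean Laplacian: sum of second partial derivatives along coordinate directions. -/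
noncomputable def laplacian {d : ℕ} (f : EuclideanSpace ℝ (Fin d) → ℝ)
    (x : EuclideanSpace ℝ (Fin d)) : ℝ :=
  ∑ i : Fin d, fderiv ℝ (fun y => fderiv ℝ f y (EuclideanSpace.single i 1)) x
    (EuclideanSpace.single i 1)

namespace MMHAux

noncomputable def rr (a b : ℝ) : ℝ := Real.sqrt (a ^ 2 + b ^ 2)

lemma rr_pos {a b : ℝ} (h : 0 < a ^ 2 + b ^ 2) : 0 < rr a b := Real.sqrt_pos.2 h
lemma rr_ne {a b : ℝ} (h : 0 < a ^ 2 + b ^ 2) : rr a b ≠ 0 := (rr_pos h).ne'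
lemma rr_sq {a b : ℝ} (h : 0 < a ^ 2 + b ^ 2) : rr a b ^ 2 = a ^ 2 + b ^ 2 := Real.sq_sqrt h.le

lemma hasDerivAt_rr_fst {a b : ℝ} (h : 0 < a ^ 2 + b ^ 2) :
    HasDerivAt (fun t => rr t b) (a / rr a b) a := by
  have h2 : HasDerivAt (fun t : ℝ => t ^ 2 + b ^ 2) (2 * a) a := by
    simpa using (hasDerivAt_pow 2 a).add_const (b ^ 2)
  have h3 := (Real.hasDerivAt_sqrt h.ne').comp a h2
  have hn : Real.sqrt (a ^ 2 + b ^ 2) ≠ 0 := rr_ne h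
  refine h3.congr_deriv ?_
  simp only [rr]
  field_simp

lemma hasDerivAt_rr_snd {a b : ℝ} (h : 0 < a ^ 2 + b ^ 2) :
    HasDerivAt (fun t => rr a t) (b / rr a b) b := by
  have h2 : HasDerivAt (fun t : ℝ => a ^ 2 + t ^ 2) (2 * b) b := by
    simpa using ((hasDerivAt_pow 2 b).const_add (a ^ 2))
  have h3 := (Real.hasDerivAt_sqrt h.ne').comp b h2
  have hn : Real.sqrt (a ^ 2 + b ^ 2) ≠ 0 := rr_ne h
  refine h3.congr_deriv ?_
  simp only [rr]
  field_simp

lemma hasDerivAt_c_fst {a b : ℝ} (h : 0 < a ^ 2 + b ^ 2) :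
    HasDerivAt (fun t => t / rr t b) (b ^ 2 / rr a b ^ 3) a := by
  have h3 := (hasDerivAt_id a).div (hasDerivAt_rr_fst h) (rr_ne h)
  refine h3.congr_deriv ?_
  have hn := rr_ne h
  have h2 := rr_sq h
  simp only [id]
  field_simp
  linear_combination h2

lemma hasDerivAt_c_snd {a b : ℝ} (h : 0 < a ^ 2 + b ^ 2) :
    HasDerivAt (fun t => a / rr a t) (-(a * b) / rr a b ^ 3) b := by
  have h3 := (hasDerivAt_const b a).div (hasDerivAt_rr_snd h) (rr_ne h)
  have hn := rr_ne h
  have he : (0 * rr a b - a * (b / rr a b)) / rr a b ^ 2 = -(a * b) / rr a b ^ 3 := by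
    field_simp
    ring
  rw [he] at h3
  exact h3

lemma hasDerivAt_q_fst {a b : ℝ} (h : 0 < a ^ 2 + b ^ 2) :
    HasDerivAt (fun t => b ^ 2 / rr t b ^ 3) (-(3 * a * b ^ 2) / rr a b ^ 5) a := by
  have h3 := (hasDerivAt_const a (b ^ 2)).div ((hasDerivAt_rr_fst h).pow 3)
    (pow_ne_zero 3 (rr_ne h))
  refine h3.congr_deriv ?_
  have hn := rr_ne h
  simp only [Pi.pow_apply, id]
  field_simp
  ring

lemma hasDerivAt_q_snd {a b : ℝ} (h : 0 < a ^ 2 + b ^ 2) :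
    HasDerivAt (fun t => a * t / rr a t ^ 3) (a / rr a b ^ 3 - 3 * a * b ^ 2 / rr a b ^ 5) b := by
  have h3 := (((hasDerivAt_id b).const_mul a)).div ((hasDerivAt_rr_snd h).pow 3)
    (pow_ne_zero 3 (rr_ne h))
  refine h3.congr_deriv ?_
  have hn := rr_ne h
  simp only [Pi.pow_apply, id]
  field_simp
  ring

lemma hasDerivAt_c2_snd {a b : ℝ} (h : 0 < a ^ 2 + b ^ 2) :
    HasDerivAt (fun t => t / rr a t) (a ^ 2 / rr a b ^ 3) b := by
  have h3 := (hasDerivAt_id b).div (hasDerivAt_rr_snd h) (rr_ne h)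
  refine h3.congr_deriv ?_
  have hn := rr_ne h
  have h2 := rr_sq h
  simp only [id]
  field_simp
  linear_combination h2

section funcs

variable (g g1 g2 : ℝ → ℝ) (p : Polynomial ℝ)

/-- The function in cartesian coordinates. -/
noncomputable def FF (a b : ℝ) : ℝ := g (rr a b) * p.eval (a / rr a b)

/-- first partial in `a` -/
noncomputable def AA (a b : ℝ) : ℝ :=
  g1 (rr a b) * (a / rr a b) * p.eval (a / rr a b)
    + g (rr a b) * (Polynomial.derivative p).eval (a / rr a b) * (b ^ 2 / rr a b ^ 3)

/-- first partial in `b` -/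
noncomputable def BB (a b : ℝ) : ℝ :=
  g1 (rr a b) * (b / rr a b) * p.eval (a / rr a b)
    - g (rr a b) * (Polynomial.derivative p).eval (a / rr a b) * (a * b / rr a b ^ 3)

/-- second partial in `a` -/
noncomputable def AA1 (a b : ℝ) : ℝ :=
  g2 (rr a b) * (a / rr a b) * (a / rr a b) * p.eval (a / rr a b)
    + g1 (rr a b) * (b ^ 2 / rr a b ^ 3) * p.eval (a / rr a b)
    + 2 * (g1 (rr a b) * (a / rr a b) * (Polynomial.derivative p).eval (a / rr a b)
        * (b ^ 2 / rr a b ^ 3))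
    + g (rr a b) * (Polynomial.derivative (Polynomial.derivative p)).eval (a / rr a b)
        * (b ^ 2 / rr a b ^ 3) ^ 2
    + g (rr a b) * (Polynomial.derivative p).eval (a / rr a b) * (-(3 * a * b ^ 2) / rr a b ^ 5)

/-- second partial in `b` -/
noncomputable def BB2 (a b : ℝ) : ℝ :=
  g2 (rr a b) * (b ^ 2 / rr a b ^ 2) * p.eval (a / rr a b)
    + g1 (rr a b) * (a ^ 2 / rr a b ^ 3) * p.eval (a / rr a b)
    - 2 * (g1 (rr a b) * (Polynomial.derivative p).eval (a / rr a b)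
        * (a * b ^ 2 / rr a b ^ 4))
    + g (rr a b) * (Polynomial.derivative (Polynomial.derivative p)).eval (a / rr a b)
        * (a ^ 2 * b ^ 2 / rr a b ^ 6)
    - g (rr a b) * (Polynomial.derivative p).eval (a / rr a b)
        * (a / rr a b ^ 3 - 3 * a * b ^ 2 / rr a b ^ 5)

variable {g g1 g2}

lemma hasDerivAt_FF_fst {a b : ℝ} (h : 0 < a ^ 2 + b ^ 2)
    (hg : HasDerivAt g (g1 (rr a b)) (rr a b)) :
    HasDerivAt (fun t => FF g p t b) (AA g g1 p a b) a := by
  have h5 : HasDerivAt (fun t => g (rr t b)) (g1 (rr a b) * (a / rr a b)) a :=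
    hg.comp a (hasDerivAt_rr_fst h)
  have h3 : HasDerivAt (fun t => p.eval (t / rr t b))
      ((Polynomial.derivative p).eval (a / rr a b) * (b ^ 2 / rr a b ^ 3)) a :=
    ((p.hasDerivAt (a / rr a b)).comp a (hasDerivAt_c_fst h) :)
  have := h5.mul h3
  refine this.congr_deriv ?_
  simp only [AA]
  ring

lemma hasDerivAt_FF_snd {a b : ℝ} (h : 0 < a ^ 2 + b ^ 2)
    (hg : HasDerivAt g (g1 (rr a b)) (rr a b)) :
    HasDerivAt (fun t => FF g p a t) (BB g g1 p a b) b := by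
  have h5 : HasDerivAt (fun t => g (rr a t)) (g1 (rr a b) * (b / rr a b)) b :=
    hg.comp b (hasDerivAt_rr_snd h)
  have h3 : HasDerivAt (fun t => p.eval (a / rr a t))
      ((Polynomial.derivative p).eval (a / rr a b) * (-(a * b) / rr a b ^ 3)) b :=
    ((p.hasDerivAt (a / rr a b)).comp b (hasDerivAt_c_snd h) :)
  have := h5.mul h3
  refine this.congr_deriv ?_
  simp only [BB]
  ring

lemma hasDerivAt_AA_fst {a b : ℝ} (h : 0 < a ^ 2 + b ^ 2)
    (hg : HasDerivAt g (g1 (rr a b)) (rr a b))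
    (hg' : HasDerivAt g1 (g2 (rr a b)) (rr a b)) :
    HasDerivAt (fun t => AA g g1 p t b) (AA1 g g1 g2 p a b) a := by
  have h1 : HasDerivAt (fun t => g1 (rr t b)) (g2 (rr a b) * (a / rr a b)) a :=
    hg'.comp a (hasDerivAt_rr_fst h)
  have h2 := hasDerivAt_c_fst h
  have h3 : HasDerivAt (fun t => p.eval (t / rr t b))
      ((Polynomial.derivative p).eval (a / rr a b) * (b ^ 2 / rr a b ^ 3)) a :=
    ((p.hasDerivAt (a / rr a b)).comp a (hasDerivAt_c_fst h) :)
  have h4 : HasDerivAt (fun t => (Polynomial.derivative p).eval (t / rr t b))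
      ((Polynomial.derivative (Polynomial.derivative p)).eval (a / rr a b)
        * (b ^ 2 / rr a b ^ 3)) a :=
    (((Polynomial.derivative p).hasDerivAt (a / rr a b)).comp a (hasDerivAt_c_fst h) :)
  have h5 : HasDerivAt (fun t => g (rr t b)) (g1 (rr a b) * (a / rr a b)) a :=
    hg.comp a (hasDerivAt_rr_fst h)
  have h6 := hasDerivAt_q_fst h
  have := ((h1.mul h2).mul h3).add ((h5.mul h4).mul h6)
  refine this.congr_deriv ?_
  simp only [AA1, Pi.mul_apply]
  ring

lemma hasDerivAt_BB_snd {a b : ℝ} (h : 0 < a ^ 2 + b ^ 2)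
    (hg : HasDerivAt g (g1 (rr a b)) (rr a b))
    (hg' : HasDerivAt g1 (g2 (rr a b)) (rr a b)) :
    HasDerivAt (fun t => BB g g1 p a t) (BB2 g g1 g2 p a b) b := by
  have h1 : HasDerivAt (fun t => g1 (rr a t)) (g2 (rr a b) * (b / rr a b)) b :=
    hg'.comp b (hasDerivAt_rr_snd h)
  have h2 := hasDerivAt_c2_snd h
  have h3 : HasDerivAt (fun t => p.eval (a / rr a t))
      ((Polynomial.derivative p).eval (a / rr a b) * (-(a * b) / rr a b ^ 3)) b :=
    ((p.hasDerivAt (a / rr a b)).comp b (hasDerivAt_c_snd h) :)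
  have h4 : HasDerivAt (fun t => (Polynomial.derivative p).eval (a / rr a t))
      ((Polynomial.derivative (Polynomial.derivative p)).eval (a / rr a b)
        * (-(a * b) / rr a b ^ 3)) b :=
    (((Polynomial.derivative p).hasDerivAt (a / rr a b)).comp b (hasDerivAt_c_snd h) :)
  have h5 : HasDerivAt (fun t => g (rr a t)) (g1 (rr a b) * (b / rr a b)) b :=
    hg.comp b (hasDerivAt_rr_snd h)
  have h6 := hasDerivAt_q_snd h
  have := ((h1.mul h2).mul h3).sub ((h5.mul h4).mul h6)
  refine this.congr_deriv ?_
  simp only [BB2, Pi.mul_apply]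
  ring

/-- The sum of the two second partials, given the Chebyshev-type ODE for `p`. -/
lemma sum_eq {a b : ℝ} (L : ℝ) (h : 0 < a ^ 2 + b ^ 2)
    (hcheb : ∀ t : ℝ, |t| ≤ 1 →
      (1 - t ^ 2) * (Polynomial.derivative (Polynomial.derivative p)).eval t
        - t * (Polynomial.derivative p).eval t + L ^ 2 * p.eval t = 0) :
    AA1 g g1 g2 p a b + BB2 g g1 g2 p a b
      = (g2 (rr a b) + g1 (rr a b) / rr a b - L ^ 2 / rr a b ^ 2 * g (rr a b))
          * p.eval (a / rr a b) := by
  have hn := rr_ne h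
  have hpos := rr_pos h
  have h2 := rr_sq h
  have hc : |a / rr a b| ≤ 1 := by
    have ha2 : (a / rr a b) ^ 2 ≤ 1 := by
      rw [div_pow, h2, div_le_one h]
      nlinarith [sq_nonneg b]
    nlinarith [abs_nonneg (a / rr a b), sq_abs (a / rr a b)]
  have hode := hcheb (a / rr a b) hc
  set n := rr a b with hndef
  set X := p.eval (a / n) with hX
  set Y := (Polynomial.derivative p).eval (a / n) with hY
  set Z := (Polynomial.derivative (Polynomial.derivative p)).eval (a / n) with hZ
  have hb2 : b ^ 2 = n ^ 2 - a ^ 2 := by rw [h2]; ring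
  simp only [AA1, BB2, ← hndef, ← hX, ← hY, ← hZ]
  rw [hb2]
  field_simp at hode ⊢
  linear_combination (g n * n ^ 2) * hode

end funcs
lemma cheb_step1 (l : ℕ) (φ : ℝ) :
    (Polynomial.derivative (Polynomial.Chebyshev.T ℝ (l : ℤ))).eval (Real.cos φ) * (-Real.sin φ)
      = -((l : ℝ) * Real.sin ((l : ℝ) * φ)) := by
  set P := Polynomial.Chebyshev.T ℝ (l : ℤ) with hP
  have hA : HasDerivAt (fun ψ => P.eval (Real.cos ψ))
      ((Polynomial.derivative P).eval (Real.cos φ) * (-Real.sin φ)) φ :=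
    (P.hasDerivAt (Real.cos φ)).comp φ (Real.hasDerivAt_cos φ)
  have hfun : (fun ψ => P.eval (Real.cos ψ)) = fun ψ => Real.cos ((l : ℝ) * ψ) := by
    funext ψ
    have := Polynomial.Chebyshev.T_real_cos ψ (l : ℤ)
    rw [hP, this]
    norm_num
  have hB : HasDerivAt (fun ψ => P.eval (Real.cos ψ)) (-((l : ℝ) * Real.sin ((l : ℝ) * φ))) φ := by
    rw [hfun]
    have h1 : HasDerivAt (fun ψ : ℝ => (l : ℝ) * ψ) (l : ℝ) φ := by
      simpa using (hasDerivAt_id φ).const_mul (l : ℝ)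
    have := (Real.hasDerivAt_cos ((l : ℝ) * φ)).comp φ h1
    refine this.congr_deriv ?_
    ring
  exact hA.unique hB

lemma cheb_ode (l : ℕ) (t : ℝ) (ht : |t| ≤ 1) :
    (1 - t ^ 2) * (Polynomial.derivative (Polynomial.derivative
        (Polynomial.Chebyshev.T ℝ (l : ℤ)))).eval t
      - t * (Polynomial.derivative (Polynomial.Chebyshev.T ℝ (l : ℤ))).eval t
      + (l : ℝ) ^ 2 * (Polynomial.Chebyshev.T ℝ (l : ℤ)).eval t = 0 := by
  obtain ⟨θ, hθ⟩ : ∃ θ : ℝ, Real.cos θ = t :=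
    ⟨Real.arccos t, Real.cos_arccos (abs_le.1 ht).1 (abs_le.1 ht).2⟩
  set P := Polynomial.Chebyshev.T ℝ (l : ℤ) with hP
  have hA : HasDerivAt (fun ψ => (Polynomial.derivative P).eval (Real.cos ψ) * (-Real.sin ψ))
      (((Polynomial.derivative (Polynomial.derivative P)).eval (Real.cos θ) * (-Real.sin θ))
          * (-Real.sin θ)
        + (Polynomial.derivative P).eval (Real.cos θ) * (-Real.cos θ)) θ := by
    exact (((Polynomial.derivative P).hasDerivAt (Real.cos θ)).comp θ
      (Real.hasDerivAt_cos θ)).mul (Real.hasDerivAt_sin θ).neg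
  have hfun : (fun ψ => (Polynomial.derivative P).eval (Real.cos ψ) * (-Real.sin ψ))
      = fun ψ => -((l : ℝ) * Real.sin ((l : ℝ) * ψ)) := funext fun ψ => cheb_step1 l ψ
  have hB : HasDerivAt (fun ψ => (Polynomial.derivative P).eval (Real.cos ψ) * (-Real.sin ψ))
      (-((l : ℝ) * ((l : ℝ) * Real.cos ((l : ℝ) * θ)))) θ := by
    rw [hfun]
    have h1 : HasDerivAt (fun ψ : ℝ => (l : ℝ) * ψ) (l : ℝ) θ := by
      simpa using (hasDerivAt_id θ).const_mul (l : ℝ)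
    have := (((Real.hasDerivAt_sin ((l : ℝ) * θ)).comp θ h1).const_mul (l : ℝ)).neg
    refine this.congr_deriv ?_
    ring
  have key := hA.unique hB
  have hcosl : Real.cos ((l : ℝ) * θ) = P.eval t := by
    rw [← hθ, hP]
    have := Polynomial.Chebyshev.T_real_cos θ (l : ℤ)
    rw [this]
    norm_num
  have hs : Real.sin θ ^ 2 = 1 - Real.cos θ ^ 2 := Real.sin_sq θ
  rw [hcosl] at key
  rw [← hθ] at *
  linear_combination key - (Polynomial.derivative (Polynomial.derivative P)).eval (Real.cos θ) * hs

section eside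

abbrev E2 := EuclideanSpace ℝ (Fin 2)

lemma fderiv_apply_eq {f : E2 → ℝ} {x v : E2} {d : ℝ}
    (hf : DifferentiableAt ℝ f x)
    (hs : HasDerivAt (fun t : ℝ => f (x + t • v)) d 0) :
    fderiv ℝ f x v = d := by
  have hline : HasDerivAt (fun t : ℝ => x + t • v) v 0 := by
    simpa using ((hasDerivAt_id (0 : ℝ)).smul_const v).const_add x
  have hf' : HasFDerivAt f (fderiv ℝ f x) ((fun t : ℝ => x + t • v) 0) := by
    simpa using hf.hasFDerivAt
  have h2 : HasDerivAt (fun t : ℝ => f (x + t • v)) (fderiv ℝ f x v) 0 :=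
    hf'.comp_hasDerivAt 0 hline
  exact h2.unique hs

lemma norm_eq_rr (x : E2) : ‖x‖ = rr (x 0) (x 1) := by
  rw [EuclideanSpace.norm_eq, rr]
  congr 1
  simp [Fin.sum_univ_two, Real.norm_eq_abs, sq_abs]

lemma pos_of_ne {x : E2} (hx : x ≠ 0) : 0 < (x 0) ^ 2 + (x 1) ^ 2 := by
  have h1 : 0 < ‖x‖ := norm_pos_iff.mpr hx
  rw [norm_eq_rr, rr] at h1
  exact Real.sqrt_pos.1 h1

lemma diff_proj (x : E2) (i : Fin 2) : DifferentiableAt ℝ (fun y : E2 => y i) x := by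
  exact (EuclideanSpace.proj i : E2 →L[ℝ] ℝ).differentiableAt

lemma diff_rr {x : E2} (h : 0 < (x 0) ^ 2 + (x 1) ^ 2) :
    DifferentiableAt ℝ (fun y : E2 => rr (y 0) (y 1)) x := by
  simp only [rr]
  exact (((diff_proj x 0).pow 2).add ((diff_proj x 1).pow 2)).sqrt h.ne'

lemma diff_c {x : E2} (h : 0 < (x 0) ^ 2 + (x 1) ^ 2) :
    DifferentiableAt ℝ (fun y : E2 => y 0 / rr (y 0) (y 1)) x := by
  simp only [div_eq_mul_inv]
  exact (diff_proj x 0).mul ((diff_rr h).inv (rr_ne h))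

variable {g g1 g2 : ℝ → ℝ} (p : Polynomial ℝ)

lemma laplacian_eq
    (hg1 : ∀ r : ℝ, 0 < r → HasDerivAt g (g1 r) r)
    (hg2 : ∀ r : ℝ, 0 < r → HasDerivAt g1 (g2 r) r)
    (u : E2 → ℝ)
    (hu : ∀ y : E2, y ≠ 0 → u y = g (rr (y 0) (y 1)) * p.eval (y 0 / rr (y 0) (y 1)))
    (x : E2) (hx : x ≠ 0) :
    laplacian u x = AA1 g g1 g2 p (x 0) (x 1) + BB2 g g1 g2 p (x 0) (x 1) := by
  have hmem : ∀ {y : E2}, y ≠ 0 → {z : E2 | z ≠ 0} ∈ nhds y := fun {y} hy =>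
    isOpen_compl_singleton.mem_nhds hy
  -- differentiability of the explicit formula
  have hbase : ∀ {y : E2}, y ≠ 0 → ∀ φ : ℝ → ℝ, (∀ r : ℝ, 0 < r → HasDerivAt φ (0 : ℝ) r → True) → True := fun _ _ _ => trivial
  have hdiffU : ∀ {y : E2}, y ≠ 0 → DifferentiableAt ℝ (fun z : E2 => FF g p (z 0) (z 1)) y := by
    intro y hy
    have h := pos_of_ne hy
    have hprr : DifferentiableAt ℝ (fun z : E2 => rr (z 0) (z 1)) y := diff_rr h
    have hpc : DifferentiableAt ℝ (fun z : E2 => z 0 / rr (z 0) (z 1)) y := diff_c h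
    have hgc : DifferentiableAt ℝ (fun z : E2 => g (rr (z 0) (z 1))) y :=
      ((hg1 _ (rr_pos h)).differentiableAt).comp y hprr
    have hpe : DifferentiableAt ℝ (fun z : E2 => p.eval (z 0 / rr (z 0) (z 1))) y :=
      (Polynomial.differentiableAt p).comp y hpc
    simp only [FF]
    exact hgc.mul hpe
  have hdiffA : ∀ {y : E2}, y ≠ 0 →
      DifferentiableAt ℝ (fun z : E2 => AA g g1 p (z 0) (z 1)) y := by
    intro y hy
    have h := pos_of_ne hy
    have hprr : DifferentiableAt ℝ (fun z : E2 => rr (z 0) (z 1)) y := diff_rr h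
    have hpc : DifferentiableAt ℝ (fun z : E2 => z 0 / rr (z 0) (z 1)) y := diff_c h
    have hgc : DifferentiableAt ℝ (fun z : E2 => g (rr (z 0) (z 1))) y :=
      ((hg1 _ (rr_pos h)).differentiableAt).comp y hprr
    have hg1c : DifferentiableAt ℝ (fun z : E2 => g1 (rr (z 0) (z 1))) y :=
      ((hg2 _ (rr_pos h)).differentiableAt).comp y hprr
    have hpe : DifferentiableAt ℝ (fun z : E2 => p.eval (z 0 / rr (z 0) (z 1))) y :=
      (Polynomial.differentiableAt p).comp y hpc
    have hpe1 : DifferentiableAt ℝ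
        (fun z : E2 => (Polynomial.derivative p).eval (z 0 / rr (z 0) (z 1))) y :=
      (Polynomial.differentiableAt (Polynomial.derivative p)).comp y hpc
    have hq1 : DifferentiableAt ℝ (fun z : E2 => (z 1) ^ 2 / rr (z 0) (z 1) ^ 3) y := by
      simp only [div_eq_mul_inv]
      exact ((diff_proj y 1).pow 2).mul ((hprr.pow 3).inv (pow_ne_zero 3 (rr_ne h)))
    simp only [AA]
    exact ((hg1c.mul hpc).mul hpe).add ((hgc.mul hpe1).mul hq1)
  have hdiffB : ∀ {y : E2}, y ≠ 0 →
      DifferentiableAt ℝ (fun z : E2 => BB g g1 p (z 0) (z 1)) y := by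
    intro y hy
    have h := pos_of_ne hy
    have hprr : DifferentiableAt ℝ (fun z : E2 => rr (z 0) (z 1)) y := diff_rr h
    have hpc : DifferentiableAt ℝ (fun z : E2 => z 0 / rr (z 0) (z 1)) y := diff_c h
    have hgc : DifferentiableAt ℝ (fun z : E2 => g (rr (z 0) (z 1))) y :=
      ((hg1 _ (rr_pos h)).differentiableAt).comp y hprr
    have hg1c : DifferentiableAt ℝ (fun z : E2 => g1 (rr (z 0) (z 1))) y :=
      ((hg2 _ (rr_pos h)).differentiableAt).comp y hprr
    have hpe : DifferentiableAt ℝ (fun z : E2 => p.eval (z 0 / rr (z 0) (z 1))) y :=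
      (Polynomial.differentiableAt p).comp y hpc
    have hpe1 : DifferentiableAt ℝ
        (fun z : E2 => (Polynomial.derivative p).eval (z 0 / rr (z 0) (z 1))) y :=
      (Polynomial.differentiableAt (Polynomial.derivative p)).comp y hpc
    have hbn : DifferentiableAt ℝ (fun z : E2 => z 1 / rr (z 0) (z 1)) y := by
      simp only [div_eq_mul_inv]
      exact (diff_proj y 1).mul (hprr.inv (rr_ne h))
    have hq2 : DifferentiableAt ℝ (fun z : E2 => z 0 * z 1 / rr (z 0) (z 1) ^ 3) y := by
      simp only [div_eq_mul_inv]
      exact ((diff_proj y 0).mul (diff_proj y 1)).mul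
        ((hprr.pow 3).inv (pow_ne_zero 3 (rr_ne h)))
    simp only [BB]
    exact ((hg1c.mul hbn).mul hpe).sub ((hgc.mul hpe1).mul hq2)
  -- coordinates of shifted points
  have hco0 : ∀ (y : E2) (t : ℝ),
      (y + t • EuclideanSpace.single (0 : Fin 2) (1 : ℝ)) 0 = y 0 + t := by
    intro y t; simp [EuclideanSpace.single_apply]
  have hco1 : ∀ (y : E2) (t : ℝ),
      (y + t • EuclideanSpace.single (0 : Fin 2) (1 : ℝ)) 1 = y 1 := by
    intro y t; simp [EuclideanSpace.single_apply]
  have hco0' : ∀ (y : E2) (t : ℝ),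
      (y + t • EuclideanSpace.single (1 : Fin 2) (1 : ℝ)) 0 = y 0 := by
    intro y t; simp [EuclideanSpace.single_apply]
  have hco1' : ∀ (y : E2) (t : ℝ),
      (y + t • EuclideanSpace.single (1 : Fin 2) (1 : ℝ)) 1 = y 1 + t := by
    intro y t; simp [EuclideanSpace.single_apply]
  -- generic slice composition
  have hcomp0 : ∀ (F : ℝ → ℝ → ℝ) (y : E2) (d : ℝ),
      HasDerivAt (fun s => F s (y 1)) d (y 0) →
      HasDerivAt (fun t : ℝ =>
        F ((y + t • EuclideanSpace.single (0 : Fin 2) (1 : ℝ)) 0)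
          ((y + t • EuclideanSpace.single (0 : Fin 2) (1 : ℝ)) 1)) d 0 := by
    intro F y d hF
    have hiner : HasDerivAt (fun t : ℝ => y 0 + t) 1 0 := by
      simpa using (hasDerivAt_id (0 : ℝ)).const_add (y 0)
    have hF' : HasDerivAt (fun s => F s (y 1)) d (y 0 + 0) := by simpa using hF
    have h2 := hF'.comp 0 hiner
    have h3 : (fun t : ℝ =>
        F ((y + t • EuclideanSpace.single (0 : Fin 2) (1 : ℝ)) 0)
          ((y + t • EuclideanSpace.single (0 : Fin 2) (1 : ℝ)) 1))
        = fun t : ℝ => F (y 0 + t) (y 1) := by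
      funext t; rw [hco0, hco1]
    rw [h3]
    simpa [Function.comp_def] using h2
  have hcomp1 : ∀ (F : ℝ → ℝ → ℝ) (y : E2) (d : ℝ),
      HasDerivAt (fun s => F (y 0) s) d (y 1) →
      HasDerivAt (fun t : ℝ =>
        F ((y + t • EuclideanSpace.single (1 : Fin 2) (1 : ℝ)) 0)
          ((y + t • EuclideanSpace.single (1 : Fin 2) (1 : ℝ)) 1)) d 0 := by
    intro F y d hF
    have hiner : HasDerivAt (fun t : ℝ => y 1 + t) 1 0 := by
      simpa using (hasDerivAt_id (0 : ℝ)).const_add (y 1)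
    have hF' : HasDerivAt (fun s => F (y 0) s) d (y 1 + 0) := by simpa using hF
    have h2 := hF'.comp 0 hiner
    have h3 : (fun t : ℝ =>
        F ((y + t • EuclideanSpace.single (1 : Fin 2) (1 : ℝ)) 0)
          ((y + t • EuclideanSpace.single (1 : Fin 2) (1 : ℝ)) 1))
        = fun t : ℝ => F (y 0) (y 1 + t) := by
      funext t; rw [hco0', hco1']
    rw [h3]
    simpa [Function.comp_def] using h2
  -- first partials of u
  have hfd0 : ∀ {y : E2}, y ≠ 0 →
      fderiv ℝ u y (EuclideanSpace.single (0 : Fin 2) (1 : ℝ)) = AA g g1 p (y 0) (y 1) := by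
    intro y hy
    have h := pos_of_ne hy
    have hev : u =ᶠ[nhds y] fun z : E2 => FF g p (z 0) (z 1) := by
      filter_upwards [hmem hy] with z hz
      exact hu z hz
    rw [hev.fderiv_eq]
    exact fderiv_apply_eq (hdiffU hy)
      (hcomp0 (FF g p) y _ (hasDerivAt_FF_fst p h (hg1 _ (rr_pos h))))
  have hfd1 : ∀ {y : E2}, y ≠ 0 →
      fderiv ℝ u y (EuclideanSpace.single (1 : Fin 2) (1 : ℝ)) = BB g g1 p (y 0) (y 1) := by
    intro y hy
    have h := pos_of_ne hy
    have hev : u =ᶠ[nhds y] fun z : E2 => FF g p (z 0) (z 1) := by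
      filter_upwards [hmem hy] with z hz
      exact hu z hz
    rw [hev.fderiv_eq]
    exact fderiv_apply_eq (hdiffU hy)
      (hcomp1 (FF g p) y _ (hasDerivAt_FF_snd p h (hg1 _ (rr_pos h))))
  -- second partials
  have hpos := pos_of_ne hx
  have h2nd0 : fderiv ℝ (fun y => fderiv ℝ u y (EuclideanSpace.single (0 : Fin 2) (1 : ℝ))) x
      (EuclideanSpace.single (0 : Fin 2) (1 : ℝ)) = AA1 g g1 g2 p (x 0) (x 1) := by
    have hev : (fun y => fderiv ℝ u y (EuclideanSpace.single (0 : Fin 2) (1 : ℝ)))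
        =ᶠ[nhds x] fun z : E2 => AA g g1 p (z 0) (z 1) := by
      filter_upwards [hmem hx] with z hz
      exact hfd0 hz
    rw [hev.fderiv_eq]
    exact fderiv_apply_eq (hdiffA hx)
      (hcomp0 (AA g g1 p) x _
        (hasDerivAt_AA_fst p hpos (hg1 _ (rr_pos hpos)) (hg2 _ (rr_pos hpos))))
  have h2nd1 : fderiv ℝ (fun y => fderiv ℝ u y (EuclideanSpace.single (1 : Fin 2) (1 : ℝ))) x
      (EuclideanSpace.single (1 : Fin 2) (1 : ℝ)) = BB2 g g1 g2 p (x 0) (x 1) := by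
    have hev : (fun y => fderiv ℝ u y (EuclideanSpace.single (1 : Fin 2) (1 : ℝ)))
        =ᶠ[nhds x] fun z : E2 => BB g g1 p (z 0) (z 1) := by
      filter_upwards [hmem hx] with z hz
      exact hfd1 hz
    rw [hev.fderiv_eq]
    exact fderiv_apply_eq (hdiffB hx)
      (hcomp1 (BB g g1 p) x _
        (hasDerivAt_BB_snd p hpos (hg1 _ (rr_pos hpos)) (hg2 _ (rr_pos hpos))))
  simp only [laplacian, Fin.sum_univ_two]
  rw [h2nd0, h2nd1]

end eside

end MMHAux




/-- The l-th angular mode u(x) = g(‖x‖)·T_l(x₁/‖x‖) (i.e. g(r)cos(lθ) in polar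
coordinates, with T_l the Chebyshev polynomial of the first kind) satisfies the modified
Helmholtz equation Δu = u on ℝ² \ {0} iff g satisfies the modified Bessel equation of
order l: r² g'' + r g' − (r² + l²) g = 0 on (0,∞). -/
theorem mode_modified_helmholtz_iff_bessel (l : ℕ) (hl : 1 ≤ l) (g : ℝ → ℝ)
    (hg : ContDiffOn ℝ 2 g (Set.Ioi 0))
    (u : EuclideanSpace ℝ (Fin 2) → ℝ)
    (hu : ∀ x : EuclideanSpace ℝ (Fin 2), x ≠ 0 →
      u x = g ‖x‖ * (Polynomial.Chebyshev.T ℝ (l : ℤ)).eval (x 0 / ‖x‖)) :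
    (∀ x : EuclideanSpace ℝ (Fin 2), x ≠ 0 → laplacian u x = u x) ↔
      ∀ r : ℝ, 0 < r →
        r ^ 2 * deriv (deriv g) r + r * deriv g r - (r ^ 2 + (l : ℝ) ^ 2) * g r = 0 := by
  have hg1' : ∀ r : ℝ, 0 < r → HasDerivAt g (deriv g r) r := fun r hr =>
    ((hg.contDiffAt (isOpen_Ioi.mem_nhds hr)).differentiableAt (by norm_num)).hasDerivAt
  have hgd : ContDiffOn ℝ 1 (deriv g) (Set.Ioi 0) := hg.deriv_of_isOpen isOpen_Ioi (by norm_num)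
  have hg2' : ∀ r : ℝ, 0 < r → HasDerivAt (deriv g) (deriv (deriv g) r) r := fun r hr =>
    ((hgd.contDiffAt (isOpen_Ioi.mem_nhds hr)).differentiableAt (by norm_num)).hasDerivAt
  set p := Polynomial.Chebyshev.T ℝ (l : ℤ) with hp
  have hu' : ∀ y : EuclideanSpace ℝ (Fin 2), y ≠ 0 →
      u y = g (MMHAux.rr (y 0) (y 1)) * p.eval (y 0 / MMHAux.rr (y 0) (y 1)) := by
    intro y hy
    rw [hu y hy, MMHAux.norm_eq_rr]
  have hlap : ∀ x : EuclideanSpace ℝ (Fin 2), x ≠ 0 →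
      laplacian u x = (deriv (deriv g) (MMHAux.rr (x 0) (x 1))
          + deriv g (MMHAux.rr (x 0) (x 1)) / MMHAux.rr (x 0) (x 1)
          - (l : ℝ) ^ 2 / MMHAux.rr (x 0) (x 1) ^ 2 * g (MMHAux.rr (x 0) (x 1)))
        * p.eval (x 0 / MMHAux.rr (x 0) (x 1)) := by
    intro x hx
    rw [MMHAux.laplacian_eq (p := p) hg1' hg2' u hu' x hx]
    exact MMHAux.sum_eq (p := p) ((l : ℝ)) (MMHAux.pos_of_ne hx)
      (fun t ht => MMHAux.cheb_ode l t ht)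
  constructor
  · intro hpde r hr
    set x : EuclideanSpace ℝ (Fin 2) := EuclideanSpace.single (0 : Fin 2) r with hxdef
    have hx0 : x 0 = r := by simp [hxdef, EuclideanSpace.single_apply]
    have hx1 : x 1 = 0 := by simp [hxdef, EuclideanSpace.single_apply]
    have hxne : x ≠ 0 := by
      intro hcon
      rw [hcon] at hx0
      simp at hx0
      exact hr.ne' hx0.symm
    have hrr : MMHAux.rr (x 0) (x 1) = r := by
      rw [hx0, hx1, MMHAux.rr]
      simp [Real.sqrt_sq hr.le]
    have heq := hpde x hxne
    rw [hlap x hxne, hu' x hxne, hrr, hx0, div_self hr.ne'] at heq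
    have hp1 : p.eval 1 = 1 := by
      have h := Polynomial.Chebyshev.T_real_cos 0 (l : ℤ)
      simpa [hp] using h
    rw [hp1, mul_one, mul_one] at heq
    have hrne : r ≠ 0 := hr.ne'
    field_simp at heq
    have hkey : r * (r ^ 2 * deriv (deriv g) r + r * deriv g r - (r ^ 2 + (l : ℝ) ^ 2) * g r)
        = r * 0 := by linear_combination r * heq
    exact mul_left_cancel₀ hrne hkey
  · intro hode x hx
    have hpos := MMHAux.pos_of_ne hx
    have hrpos := MMHAux.rr_pos hpos
    have h := hode (MMHAux.rr (x 0) (x 1)) hrpos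
    rw [hlap x hx, hu' x hx]
    have hco : deriv (deriv g) (MMHAux.rr (x 0) (x 1))
        + deriv g (MMHAux.rr (x 0) (x 1)) / MMHAux.rr (x 0) (x 1)
        - (l : ℝ) ^ 2 / MMHAux.rr (x 0) (x 1) ^ 2 * g (MMHAux.rr (x 0) (x 1))
        = g (MMHAux.rr (x 0) (x 1)) := by
      have hn := hrpos.ne'
      field_simp
      linear_combination h
    rw [hco]
end

section
/- Let x(α, t) = (X(α,t), Y(α,t)) be a twice continuously differentiable map from ℝ² to ℝ², set s_α(α,t) = ‖∂_α x(α,t)‖ and assume s_α > 0 everywhere. Let θ(α,t) be a continuously differentiable function with ∂_α x = s_α·(cos θ, sin θ), define the unit tangent ŝ = (cos θ, sin θ) and unit normal n̂ = (sin θ, −cos θ), and suppose the motion satisfies ∂_t x = V·n̂ + T·ŝ for continuously differentiable functions V(α,t) and T(α,t). Then the tangent angle evolves according to s_α·∂_t θ = T·∂_α θ − ∂_α V, i.e. θ_t = (θ_α T − V_α)/s_α. -/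
open Real

private lemma hasDerivAt_fst' (f : ℝ × ℝ → ℝ) (hf : Differentiable ℝ f) (α t : ℝ) :
    HasDerivAt (fun a => f (a, t)) (fderiv ℝ f (α, t) (1, 0)) α := by
  have hc : HasDerivAt (fun a : ℝ => (a, t)) ((1 : ℝ), (0 : ℝ)) α :=
    HasDerivAt.prodMk (hasDerivAt_id α) (hasDerivAt_const α t)
  exact (hf (α, t)).hasFDerivAt.comp_hasDerivAt α hc

private lemma hasDerivAt_snd' (f : ℝ × ℝ → ℝ) (hf : Differentiable ℝ f) (α t : ℝ) :
    HasDerivAt (fun s => f (α, s)) (fderiv ℝ f (α, t) (0, 1)) t := by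
  have hc : HasDerivAt (fun s : ℝ => ((α : ℝ), s)) ((0 : ℝ), (1 : ℝ)) t :=
    HasDerivAt.prodMk (hasDerivAt_const t α) (hasDerivAt_id t)
  exact (hf (α, t)).hasFDerivAt.comp_hasDerivAt t hc

private lemma mixed_partials (f : ℝ × ℝ → ℝ) (hf : ContDiff ℝ 2 f) (α t : ℝ) :
    deriv (fun s => deriv (fun a => f (a, s)) α) t
      = deriv (fun a => deriv (fun s => f (a, s)) t) α := by
  have hdf : Differentiable ℝ f := hf.differentiable (by norm_num)
  set F := fderiv ℝ f with hF
  have hF1 : ContDiff ℝ 1 F := hf.fderiv_right (by norm_num)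
  have hFd : Differentiable ℝ F := hF1.differentiable one_ne_zero
  have e1 : (fun s => deriv (fun a => f (a, s)) α) = fun s => F (α, s) (1, 0) := by
    funext s; exact (hasDerivAt_fst' f hdf α s).deriv
  have e2 : (fun a => deriv (fun s => f (a, s)) t) = fun a => F (a, t) (0, 1) := by
    funext a; exact (hasDerivAt_snd' f hdf a t).deriv
  rw [e1, e2]
  have hc2 : HasDerivAt (fun s : ℝ => ((α : ℝ), s)) ((0 : ℝ), (1 : ℝ)) t :=
    HasDerivAt.prodMk (hasDerivAt_const t α) (hasDerivAt_id t)
  have hc1 : HasDerivAt (fun a : ℝ => (a, (t : ℝ))) ((1 : ℝ), (0 : ℝ)) α :=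
    HasDerivAt.prodMk (hasDerivAt_id α) (hasDerivAt_const α t)
  have hFt : HasDerivAt (fun s => F (α, s)) (fderiv ℝ F (α, t) (0, 1)) t :=
    (hFd (α, t)).hasFDerivAt.comp_hasDerivAt t hc2
  have hFa : HasDerivAt (fun a => F (a, t)) (fderiv ℝ F (α, t) (1, 0)) α :=
    (hFd (α, t)).hasFDerivAt.comp_hasDerivAt α hc1
  have h1 : HasDerivAt (fun s => F (α, s) ((1 : ℝ), (0 : ℝ)))
      (fderiv ℝ F (α, t) (0, 1) (1, 0)) t := by
    have := hFt.clm_apply (hasDerivAt_const t ((1 : ℝ), (0 : ℝ)))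
    simpa using this
  have h2 : HasDerivAt (fun a => F (a, t) ((0 : ℝ), (1 : ℝ)))
      (fderiv ℝ F (α, t) (1, 0) (0, 1)) α := by
    have := hFa.clm_apply (hasDerivAt_const α ((0 : ℝ), (1 : ℝ)))
    simpa using this
  rw [h1.deriv, h2.deriv]
  exact second_derivative_symmetric (fun y => (hdf y).hasFDerivAt)
    (hFd (α, t)).hasFDerivAt (0, 1) (1, 0)

/-- For an evolving plane curve x(α,t) = (X,Y) with local arclength
s_α = ‖x_α‖ > 0, tangent angle θ (so x_α = s_α(cos θ, sin θ)), and motion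
x_t = V n̂ + T ŝ where ŝ = (cos θ, sin θ) and n̂ = (sin θ, −cos θ), the tangent angle
evolves according to s_α θ_t = T θ_α − V_α. -/
theorem tangent_angle_evolution (X Y sα θ V T : ℝ → ℝ → ℝ)
    (hX : ContDiff ℝ 2 (fun p : ℝ × ℝ => X p.1 p.2))
    (hY : ContDiff ℝ 2 (fun p : ℝ × ℝ => Y p.1 p.2))
    (hθ : ContDiff ℝ 1 (fun p : ℝ × ℝ => θ p.1 p.2))
    (hV : ContDiff ℝ 1 (fun p : ℝ × ℝ => V p.1 p.2))
    (hT : ContDiff ℝ 1 (fun p : ℝ × ℝ => T p.1 p.2))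
    (hs : ∀ α t : ℝ, sα α t =
      Real.sqrt ((deriv (fun a => X a t) α) ^ 2 + (deriv (fun a => Y a t) α) ^ 2))
    (hspos : ∀ α t : ℝ, 0 < sα α t)
    (htanX : ∀ α t : ℝ, deriv (fun a => X a t) α = sα α t * Real.cos (θ α t))
    (htanY : ∀ α t : ℝ, deriv (fun a => Y a t) α = sα α t * Real.sin (θ α t))
    (hmotX : ∀ α t : ℝ, deriv (fun s => X α s) t
      = V α t * Real.sin (θ α t) + T α t * Real.cos (θ α t))
    (hmotY : ∀ α t : ℝ, deriv (fun s => Y α s) t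
      = -(V α t * Real.cos (θ α t)) + T α t * Real.sin (θ α t)) :
    ∀ α t : ℝ, sα α t * deriv (fun s => θ α s) t
      = T α t * deriv (fun a => θ a t) α - deriv (fun a => V a t) α := by
  intro α t
  have hXd : Differentiable ℝ (fun p : ℝ × ℝ => X p.1 p.2) := hX.differentiable (by norm_num)
  have hYd : Differentiable ℝ (fun p : ℝ × ℝ => Y p.1 p.2) := hY.differentiable (by norm_num)
  have hθd : Differentiable ℝ (fun p : ℝ × ℝ => θ p.1 p.2) := hθ.differentiable one_ne_zero
  have hVd : Differentiable ℝ (fun p : ℝ × ℝ => V p.1 p.2) := hV.differentiable one_ne_zero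
  have hTd : Differentiable ℝ (fun p : ℝ × ℝ => T p.1 p.2) := hT.differentiable one_ne_zero
  -- derivatives of θ, V, T along the lines
  have Hθt : HasDerivAt (fun s => θ α s)
      (fderiv ℝ (fun p : ℝ × ℝ => θ p.1 p.2) (α, t) (0, 1)) t := hasDerivAt_snd' _ hθd α t
  have Hθa : HasDerivAt (fun a => θ a t)
      (fderiv ℝ (fun p : ℝ × ℝ => θ p.1 p.2) (α, t) (1, 0)) α := hasDerivAt_fst' _ hθd α t
  have HVa : HasDerivAt (fun a => V a t)
      (fderiv ℝ (fun p : ℝ × ℝ => V p.1 p.2) (α, t) (1, 0)) α := hasDerivAt_fst' _ hVd α t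
  have HTa : HasDerivAt (fun a => T a t)
      (fderiv ℝ (fun p : ℝ × ℝ => T p.1 p.2) (α, t) (1, 0)) α := hasDerivAt_fst' _ hTd α t
  set dθt := fderiv ℝ (fun p : ℝ × ℝ => θ p.1 p.2) (α, t) (0, 1) with hdθt
  set dθa := fderiv ℝ (fun p : ℝ × ℝ => θ p.1 p.2) (α, t) (1, 0) with hdθa
  set dVa := fderiv ℝ (fun p : ℝ × ℝ => V p.1 p.2) (α, t) (1, 0) with hdVa
  set dTa := fderiv ℝ (fun p : ℝ × ℝ => T p.1 p.2) (α, t) (1, 0) with hdTa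
  -- differentiability of s ↦ sα α s at t
  have hsα_eq : (fun s => sα α s) = fun s =>
      Real.sqrt ((fderiv ℝ (fun p : ℝ × ℝ => X p.1 p.2) (α, s) (1, 0)) ^ 2
        + (fderiv ℝ (fun p : ℝ × ℝ => Y p.1 p.2) (α, s) (1, 0)) ^ 2) := by
    funext s
    rw [hs α s, (hasDerivAt_fst' _ hXd α s).deriv, (hasDerivAt_fst' _ hYd α s).deriv]
  have hFX : Differentiable ℝ (fderiv ℝ (fun p : ℝ × ℝ => X p.1 p.2)) :=
    (hX.fderiv_right (by norm_num : (1 : WithTop ℕ∞) + 1 ≤ 2)).differentiable one_ne_zero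
  have hFY : Differentiable ℝ (fderiv ℝ (fun p : ℝ × ℝ => Y p.1 p.2)) :=
    (hY.fderiv_right (by norm_num : (1 : WithTop ℕ∞) + 1 ≤ 2)).differentiable one_ne_zero
  have hu : DifferentiableAt ℝ (fun s =>
      (fderiv ℝ (fun p : ℝ × ℝ => X p.1 p.2) (α, s) (1, 0)) ^ 2
        + (fderiv ℝ (fun p : ℝ × ℝ => Y p.1 p.2) (α, s) (1, 0)) ^ 2) t := by
    have h1 : HasDerivAt (fun s => fderiv ℝ (fun p : ℝ × ℝ => X p.1 p.2) (α, s) ((1:ℝ), (0:ℝ)))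
        (fderiv ℝ (fderiv ℝ (fun p : ℝ × ℝ => X p.1 p.2)) (α, t) (0, 1) (1, 0)) t := by
      have hc2 : HasDerivAt (fun s : ℝ => ((α : ℝ), s)) ((0 : ℝ), (1 : ℝ)) t :=
        HasDerivAt.prodMk (hasDerivAt_const t α) (hasDerivAt_id t)
      have hFt : HasDerivAt (fun s => fderiv ℝ (fun p : ℝ × ℝ => X p.1 p.2) (α, s))
          (fderiv ℝ (fderiv ℝ (fun p : ℝ × ℝ => X p.1 p.2)) (α, t) (0, 1)) t :=
        (hFX (α, t)).hasFDerivAt.comp_hasDerivAt t hc2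
      simpa using hFt.clm_apply (hasDerivAt_const t ((1 : ℝ), (0 : ℝ)))
    have h2 : HasDerivAt (fun s => fderiv ℝ (fun p : ℝ × ℝ => Y p.1 p.2) (α, s) ((1:ℝ), (0:ℝ)))
        (fderiv ℝ (fderiv ℝ (fun p : ℝ × ℝ => Y p.1 p.2)) (α, t) (0, 1) (1, 0)) t := by
      have hc2 : HasDerivAt (fun s : ℝ => ((α : ℝ), s)) ((0 : ℝ), (1 : ℝ)) t :=
        HasDerivAt.prodMk (hasDerivAt_const t α) (hasDerivAt_id t)
      have hFt : HasDerivAt (fun s => fderiv ℝ (fun p : ℝ × ℝ => Y p.1 p.2) (α, s))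
          (fderiv ℝ (fderiv ℝ (fun p : ℝ × ℝ => Y p.1 p.2)) (α, t) (0, 1)) t :=
        (hFY (α, t)).hasFDerivAt.comp_hasDerivAt t hc2
      simpa using hFt.clm_apply (hasDerivAt_const t ((1 : ℝ), (0 : ℝ)))
    exact ((h1.differentiableAt.pow 2).add (h2.differentiableAt.pow 2))
  have hne : ((fderiv ℝ (fun p : ℝ × ℝ => X p.1 p.2) (α, t) (1, 0)) ^ 2
      + (fderiv ℝ (fun p : ℝ × ℝ => Y p.1 p.2) (α, t) (1, 0)) ^ 2) ≠ 0 := by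
    have h := hspos α t
    have h2 := congrFun hsα_eq t
    rw [h2] at h
    exact ne_of_gt (Real.sqrt_pos.mp h)
  have hsαd : DifferentiableAt ℝ (fun s => sα α s) t := by
    rw [hsα_eq]
    exact (Real.hasDerivAt_sqrt hne).differentiableAt.comp t hu
  have HDsα : HasDerivAt (fun s => sα α s) (deriv (fun s => sα α s) t) t := hsαd.hasDerivAt
  set Dsα := deriv (fun s => sα α s) t with hDsα
  -- equation from X
  have eX1 : (fun s => deriv (fun a => X a s) α) = fun s => sα α s * Real.cos (θ α s) := by
    funext s; exact htanX α s
  have eX2 : (fun a => deriv (fun s => X a s) t)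
      = fun a => V a t * Real.sin (θ a t) + T a t * Real.cos (θ a t) := by
    funext a; exact hmotX a t
  have eY1 : (fun s => deriv (fun a => Y a s) α) = fun s => sα α s * Real.sin (θ α s) := by
    funext s; exact htanY α s
  have eY2 : (fun a => deriv (fun s => Y a s) t)
      = fun a => -(V a t * Real.cos (θ a t)) + T a t * Real.sin (θ a t) := by
    funext a; exact hmotY a t
  have mX := mixed_partials (fun p : ℝ × ℝ => X p.1 p.2) hX α t
  have mY := mixed_partials (fun p : ℝ × ℝ => Y p.1 p.2) hY α t
  simp only at mX mY
  rw [eX1, eX2] at mX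
  rw [eY1, eY2] at mY
  have dX1 : HasDerivAt (fun s => sα α s * Real.cos (θ α s))
      (Dsα * Real.cos (θ α t) + sα α t * (-Real.sin (θ α t) * dθt)) t :=
    HDsα.mul Hθt.cos
  have dX2 : HasDerivAt (fun a => V a t * Real.sin (θ a t) + T a t * Real.cos (θ a t))
      ((dVa * Real.sin (θ α t) + V α t * (Real.cos (θ α t) * dθa))
        + (dTa * Real.cos (θ α t) + T α t * (-Real.sin (θ α t) * dθa))) α :=
    (HVa.mul Hθa.sin).add (HTa.mul Hθa.cos)
  have dY1 : HasDerivAt (fun s => sα α s * Real.sin (θ α s))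
      (Dsα * Real.sin (θ α t) + sα α t * (Real.cos (θ α t) * dθt)) t :=
    HDsα.mul Hθt.sin
  have dY2 : HasDerivAt (fun a => -(V a t * Real.cos (θ a t)) + T a t * Real.sin (θ a t))
      (-(dVa * Real.cos (θ α t) + V α t * (-Real.sin (θ α t) * dθa))
        + (dTa * Real.sin (θ α t) + T α t * (Real.cos (θ α t) * dθa))) α :=
    ((HVa.mul Hθa.cos).neg).add (HTa.mul Hθa.sin)
  rw [dX1.deriv, dX2.deriv] at mX
  rw [dY1.deriv, dY2.deriv] at mY
  rw [Hθt.deriv, Hθa.deriv, HVa.deriv]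
  have hpyth := Real.sin_sq_add_cos_sq (θ α t)
  linear_combination (-(Real.sin (θ α t))) * mX + Real.cos (θ α t) * mY
    - (sα α t * dθt - T α t * dθa + dVa) * hpyth
end

section
/- Let x : ℝ → ℝ² be continuously differentiable and 2π-periodic with ‖x'(α)‖ > 0 for all α, and suppose x is injective on [0, 2π). Then for each fixed α, the ratio ‖x(α) − x(α')‖ / (2·|sin((α − α')/2)|), defined for α' with α − α' not an integer multiple of 2π, tends to ‖x'(α)‖ as α' → α. Consequently the function (α, α') ↦ log(‖x(α) − x(α')‖ / (2·|sin((α − α')/2)|)) has a removable singularity on the diagonal, with limiting value log‖x'(α)‖. -/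
open Real Filter Topology

/-- For a C¹, 2π-periodic, regular closed curve x injective on [0,2π), the
ratio ‖x(α) − x(α')‖ / (2|sin((α−α')/2)|) (defined when α − α' is not an integer multiple
of 2π) tends to ‖x'(α)‖ as α' → α, and hence its logarithm has a removable singularity on
the diagonal with limiting value log ‖x'(α)‖. -/
theorem log_kernel_removable_singularity (x : ℝ → EuclideanSpace ℝ (Fin 2))
    (hx : ContDiff ℝ 1 x) (hper : ∀ α : ℝ, x (α + 2 * π) = x α)
    (hreg : ∀ α : ℝ, 0 < ‖deriv x α‖)
    (hinj : Set.InjOn x (Set.Ico 0 (2 * π))) :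
    ∀ α : ℝ,
      Tendsto (fun α' : ℝ => ‖x α - x α'‖ / (2 * |Real.sin ((α - α') / 2)|))
        (nhdsWithin α {α' : ℝ | ∀ n : ℤ, α - α' ≠ n * (2 * π)}) (nhds ‖deriv x α‖)
      ∧ Tendsto (fun α' : ℝ =>
            Real.log (‖x α - x α'‖ / (2 * |Real.sin ((α - α') / 2)|)))
          (nhdsWithin α {α' : ℝ | ∀ n : ℤ, α - α' ≠ n * (2 * π)})
          (nhds (Real.log ‖deriv x α‖)) := by
  have hd : Differentiable ℝ x := hx.differentiable one_ne_zero
  intro α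
  have hsub : {α' : ℝ | ∀ n : ℤ, α - α' ≠ n * (2 * π)} ⊆ {α}ᶜ := by
    intro a ha h
    have h0 := ha 0
    simp only [Set.mem_singleton_iff] at h
    apply h0
    simp [h]
  have hle : nhdsWithin α {α' : ℝ | ∀ n : ℤ, α - α' ≠ n * (2 * π)} ≤ 𝓝[≠] α :=
    nhdsWithin_mono α hsub
  -- Factor 1: difference quotient
  have h1 : Tendsto (fun α' : ℝ => ‖x α - x α'‖ / |α - α'|) (𝓝[≠] α)
      (𝓝 ‖deriv x α‖) := by
    have hda := (hd α).hasDerivAt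
    rw [hasDerivAt_iff_tendsto_slope] at hda
    have hn := hda.norm
    refine hn.congr fun b => ?_
    simp [slope, norm_smul, abs_sub_comm α b, norm_sub_rev (x α) (x b),
      div_eq_inv_mul]
  -- sin t / t → 1
  have hs : Tendsto (fun t : ℝ => Real.sin t / t) (𝓝[≠] (0 : ℝ)) (𝓝 1) := by
    have hds := Real.hasDerivAt_sin 0
    rw [hasDerivAt_iff_tendsto_slope] at hds
    rw [Real.cos_zero] at hds
    refine hds.congr fun t => ?_
    simp [slope_def_field]
  have h2' : Tendsto (fun t : ℝ => |t| / |Real.sin t|) (𝓝[≠] (0 : ℝ)) (𝓝 1) := by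
    have h := (hs.inv₀ one_ne_zero).abs
    simp only [inv_one, abs_one] at h
    refine h.congr fun t => ?_
    rw [inv_div, abs_div]
  have hmap : Tendsto (fun α' : ℝ => (α - α') / 2) (𝓝[≠] α) (𝓝[≠] (0 : ℝ)) := by
    apply tendsto_nhdsWithin_of_tendsto_nhds_of_eventually_within
    · have hc : ContinuousAt (fun α' : ℝ => (α - α') / 2) α := by fun_prop
      simpa using hc.tendsto.mono_left nhdsWithin_le_nhds
    · filter_upwards [self_mem_nhdsWithin] with b hb
      simp only [Set.mem_compl_iff, Set.mem_singleton_iff] at hb ⊢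
      intro h
      apply hb
      have : α - b = 0 := by linarith [(div_eq_zero_iff.mp h).resolve_right (by norm_num)]
      linarith
  -- Factor 2
  have h2 : Tendsto (fun α' : ℝ => |α - α'| / (2 * |Real.sin ((α - α') / 2)|))
      (𝓝[≠] α) (𝓝 1) := by
    have h := h2'.comp hmap
    refine h.congr fun b => ?_
    have habs : |α - b| = 2 * |(α - b) / 2| := by
      rw [abs_div]
      norm_num
      ring
    simp only [Function.comp]
    rw [habs, mul_div_mul_left _ _ (two_ne_zero)]
  -- product
  have hprod : Tendsto (fun α' : ℝ => ‖x α - x α'‖ / (2 * |Real.sin ((α - α') / 2)|))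
      (𝓝[≠] α) (𝓝 ‖deriv x α‖) := by
    have h := h1.mul h2
    rw [mul_one] at h
    refine h.congr' ?_
    filter_upwards [self_mem_nhdsWithin] with b hb
    simp only [Set.mem_compl_iff, Set.mem_singleton_iff] at hb
    have hab : |α - b| ≠ 0 := by
      simp only [ne_eq, abs_eq_zero, sub_eq_zero]
      exact fun h => hb h.symm
    field_simp
  have hT : Tendsto (fun α' : ℝ => ‖x α - x α'‖ / (2 * |Real.sin ((α - α') / 2)|))
      (nhdsWithin α {α' : ℝ | ∀ n : ℤ, α - α' ≠ n * (2 * π)}) (𝓝 ‖deriv x α‖) :=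
    hprod.mono_left hle
  refine ⟨hT, ?_⟩
  exact ((Real.continuousAt_log (ne_of_gt (hreg α))).tendsto).comp hT
end

section
/- Let x : ℝ → ℝ², x(α) = (X(α), Y(α)), be twice continuously differentiable and 2π-periodic with s_α(α) := ‖x'(α)‖ > 0 for all α, and suppose x is injective on [0, 2π). Define the unit normal n(α) = (Y'(α), −X'(α))/s_α(α). Then for each fixed α, the double-layer-type kernel ((x(α) − x(α'))·n(α')·s_α(α')) / (2π·‖x(α) − x(α')‖²) tends, as α' → α, to the finite limit (1/(4π))·(X''(α)·Y'(α) − X'(α)·Y''(α)) / (X'(α)² + Y'(α)²). -/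
open Real Filter
open Topology

/-- For a C², 2π-periodic, regular closed plane curve x = (X, Y) injective on
[0,2π), with unit normal n = (Y', −X')/s_α where s_α = ‖x'‖, the double-layer-type kernel
((x(α) − x(α'))·n(α')·s_α(α')) / (2π ‖x(α) − x(α')‖²) tends, as α' → α, to
(1/(4π))·(X'' Y' − X' Y'')/(X'² + Y'²) evaluated at α. -/
theorem double_layer_kernel_diagonal_limit (X Y : ℝ → ℝ)
    (hX : ContDiff ℝ 2 X) (hY : ContDiff ℝ 2 Y)
    (hXper : ∀ α : ℝ, X (α + 2 * π) = X α) (hYper : ∀ α : ℝ, Y (α + 2 * π) = Y α)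
    (sα : ℝ → ℝ)
    (hs : ∀ α : ℝ, sα α = Real.sqrt ((deriv X α) ^ 2 + (deriv Y α) ^ 2))
    (hspos : ∀ α : ℝ, 0 < sα α)
    (hinj : Set.InjOn (fun α => (X α, Y α)) (Set.Ico 0 (2 * π))) :
    ∀ α : ℝ,
      Tendsto (fun α' : ℝ =>
          ((X α - X α') * (deriv Y α' / sα α') + (Y α - Y α') * (-(deriv X α') / sα α'))
              * sα α'
            / (2 * π * ((X α - X α') ^ 2 + (Y α - Y α') ^ 2)))
        (nhdsWithin α {α}ᶜ)
        (nhds ((1 / (4 * π)) *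
          (deriv (deriv X) α * deriv Y α - deriv X α * deriv (deriv Y) α) /
            ((deriv X α) ^ 2 + (deriv Y α) ^ 2))) := by
  intro α
  have hX1 : Differentiable ℝ X := hX.differentiable (by norm_num)
  have hY1 : Differentiable ℝ Y := hY.differentiable (by norm_num)
  have hX' : ContDiff ℝ 1 (deriv X) :=
    ((contDiff_succ_iff_deriv.mp (show ContDiff ℝ (1+1) X by norm_num; exact hX))).2.2
  have hY' : ContDiff ℝ 1 (deriv Y) :=
    ((contDiff_succ_iff_deriv.mp (show ContDiff ℝ (1+1) Y by norm_num; exact hY))).2.2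
  have hX'd : Differentiable ℝ (deriv X) := hX'.differentiable (by norm_num)
  have hY'd : Differentiable ℝ (deriv Y) := hY'.differentiable (by norm_num)
  have hX''c : Continuous (deriv (deriv X)) := hX'.continuous_deriv le_rfl
  have hY''c : Continuous (deriv (deriv Y)) := hY'.continuous_deriv le_rfl
  set a1 := deriv X α with ha1
  set b1 := deriv Y α with hb1
  set a2 := deriv (deriv X) α with ha2
  set b2 := deriv (deriv Y) α with hb2
  have hsum : 0 < a1 ^ 2 + b1 ^ 2 := by
    have := hspos α; rw [hs α] at this; exact Real.sqrt_pos.mp this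
  have hπ : (0:ℝ) < π := Real.pi_pos
  -- slope limits
  have hslopeX : Tendsto (fun t => (X t - X α) / (t - α)) (𝓝[≠]α) (𝓝 a1) := by
    have := hasDerivAt_iff_tendsto_slope.mp (hX1 α).hasDerivAt
    simpa [slope_fun_def_field] using this
  have hslopeY : Tendsto (fun t => (Y t - Y α) / (t - α)) (𝓝[≠]α) (𝓝 b1) := by
    have := hasDerivAt_iff_tendsto_slope.mp (hY1 α).hasDerivAt
    simpa [slope_fun_def_field] using this
  set N : ℝ → ℝ := fun t => (X α - X t) * deriv Y t - (Y α - Y t) * deriv X t with hNdef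
  set D : ℝ → ℝ := fun t => (X α - X t) ^ 2 + (Y α - Y t) ^ 2 with hDdef
  -- Step 1 : L'Hopital for N / (t-α)^2
  have hN' : ∀ t : ℝ, HasDerivAt N
      ((X α - X t) * deriv (deriv Y) t - (Y α - Y t) * deriv (deriv X) t) t := by
    intro t
    have h1 : HasDerivAt (fun u => X α - X u) (-(deriv X t)) t :=
      ((hX1 t).hasDerivAt).const_sub (X α)
    have h2 : HasDerivAt (fun u => Y α - Y u) (-(deriv Y t)) t :=
      ((hY1 t).hasDerivAt).const_sub (Y α)
    have h3 : HasDerivAt (deriv X) (deriv (deriv X) t) t := (hX'd t).hasDerivAt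
    have h4 : HasDerivAt (deriv Y) (deriv (deriv Y) t) t := (hY'd t).hasDerivAt
    have := (h1.mul h4).sub (h2.mul h3)
    exact this.congr_deriv (by ring)
  have hg' : ∀ t : ℝ, HasDerivAt (fun u => (u - α) ^ 2) (2 * (t - α)) t := by
    intro t
    have := ((hasDerivAt_id t).sub_const α).pow 2
    exact this.congr_deriv (by simp)
  have hdiv : Tendsto (fun t =>
      ((X α - X t) * deriv (deriv Y) t - (Y α - Y t) * deriv (deriv X) t) / (2 * (t - α)))
      (𝓝[≠]α) (𝓝 ((a2 * b1 - a1 * b2) / 2)) := by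
    have hYY : Tendsto (fun t => deriv (deriv Y) t) (𝓝[≠]α) (𝓝 b2) :=
      (hY''c.tendsto α).mono_left nhdsWithin_le_nhds
    have hXX : Tendsto (fun t => deriv (deriv X) t) (𝓝[≠]α) (𝓝 a2) :=
      (hX''c.tendsto α).mono_left nhdsWithin_le_nhds
    have hT : Tendsto (fun t =>
        (-((X t - X α) / (t - α)) * deriv (deriv Y) t
          + ((Y t - Y α) / (t - α)) * deriv (deriv X) t) / 2)
        (𝓝[≠]α) (𝓝 ((-a1 * b2 + b1 * a2) / 2)) :=
      ((((hslopeX.neg).mul hYY).add (hslopeY.mul hXX)).div_const 2)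
    have heq : ∀ᶠ t in 𝓝[≠]α,
        (-((X t - X α) / (t - α)) * deriv (deriv Y) t
          + ((Y t - Y α) / (t - α)) * deriv (deriv X) t) / 2
        = ((X α - X t) * deriv (deriv Y) t - (Y α - Y t) * deriv (deriv X) t)
            / (2 * (t - α)) := by
      filter_upwards [self_mem_nhdsWithin] with t ht
      have hne : t - α ≠ 0 := sub_ne_zero.mpr ht
      field_simp
      ring
    have : (-a1 * b2 + b1 * a2) / 2 = (a2 * b1 - a1 * b2) / 2 := by ring
    rw [this] at hT
    exact hT.congr' heq
  have hNg : Tendsto (fun t => N t / (t - α) ^ 2) (𝓝[≠]α)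
      (𝓝 ((a2 * b1 - a1 * b2) / 2)) := by
    apply HasDerivAt.lhopital_zero_nhdsNE
        (f' := fun t => (X α - X t) * deriv (deriv Y) t - (Y α - Y t) * deriv (deriv X) t)
        (g' := fun t => 2 * (t - α))
    · exact Eventually.of_forall hN'
    · exact Eventually.of_forall hg'
    · filter_upwards [self_mem_nhdsWithin] with t ht
      exact mul_ne_zero two_ne_zero (sub_ne_zero.mpr ht)
    · have : Tendsto N (𝓝[≠]α) (𝓝 (N α)) :=
        ((hN' α).continuousAt.tendsto).mono_left nhdsWithin_le_nhds
      simpa [hNdef] using this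
    · have : Tendsto (fun t : ℝ => (t - α) ^ 2) (𝓝[≠]α) (𝓝 ((α - α) ^ 2)) :=
        ((hg' α).continuousAt.tendsto).mono_left nhdsWithin_le_nhds
      simpa using this
    · exact hdiv
  -- Step 2 : denominator
  have hDg : Tendsto (fun t => 2 * π * (D t / (t - α) ^ 2)) (𝓝[≠]α)
      (𝓝 (2 * π * (a1 ^ 2 + b1 ^ 2))) := by
    have hT : Tendsto (fun t => ((X t - X α) / (t - α)) ^ 2 + ((Y t - Y α) / (t - α)) ^ 2)
        (𝓝[≠]α) (𝓝 (a1 ^ 2 + b1 ^ 2)) := ((hslopeX.pow 2).add (hslopeY.pow 2))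
    have heq : ∀ᶠ t in 𝓝[≠]α,
        ((X t - X α) / (t - α)) ^ 2 + ((Y t - Y α) / (t - α)) ^ 2 = D t / (t - α) ^ 2 := by
      filter_upwards [self_mem_nhdsWithin] with t ht
      have hne : t - α ≠ 0 := sub_ne_zero.mpr ht
      field_simp [hDdef]
      ring
    exact (tendsto_const_nhds.mul (hT.congr' heq))
  have hden : 2 * π * (a1 ^ 2 + b1 ^ 2) ≠ 0 := by positivity
  have hmain : Tendsto (fun t => (N t / (t - α) ^ 2) / (2 * π * (D t / (t - α) ^ 2)))
      (𝓝[≠]α) (𝓝 (((a2 * b1 - a1 * b2) / 2) / (2 * π * (a1 ^ 2 + b1 ^ 2)))) :=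
    hNg.div hDg hden
  -- Step 3 : identify the function and the limit
  have hfun : ∀ᶠ t in 𝓝[≠]α,
      (N t / (t - α) ^ 2) / (2 * π * (D t / (t - α) ^ 2))
      = ((X α - X t) * (deriv Y t / sα t) + (Y α - Y t) * (-(deriv X t) / sα t)) * sα t
          / (2 * π * ((X α - X t) ^ 2 + (Y α - Y t) ^ 2)) := by
    filter_upwards [self_mem_nhdsWithin] with t ht
    have hne : t - α ≠ 0 := sub_ne_zero.mpr ht
    have hsne : sα t ≠ 0 := (hspos t).ne'
    have hnum : ((X α - X t) * (deriv Y t / sα t) + (Y α - Y t) * (-(deriv X t) / sα t)) * sα t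
        = N t := by
      field_simp [hNdef]
      ring
    rw [hnum]
    show N t / (t - α) ^ 2 / (2 * π * (D t / (t - α) ^ 2)) = N t / (2 * π * D t)
    rcases eq_or_ne (D t) 0 with h | h
    · simp [h]
    · field_simp
  have hlim : ((a2 * b1 - a1 * b2) / 2) / (2 * π * (a1 ^ 2 + b1 ^ 2))
      = (1 / (4 * π)) * (a2 * b1 - a1 * b2) / (a1 ^ 2 + b1 ^ 2) := by
    rw [div_div, div_eq_div_iff (by positivity) (by positivity)]
    field_simp
    ring
  rw [hlim] at hmain
  exact hmain.congr' hfun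
end
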